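/- For any three jointly distributed random variables X, Y, Z on a finite probability space, H(Z) ≤ H(Z|X) + H(Z|Y) + I(X:Y). -/

import Mathlib

open scoped BigOperators

namespace PaperIngleton

open Classical in
/-- Probability of an event under a pmf `p` on a finite sample space. -/
noncomputable def prob {Ω : Type*} [Fintype Ω] (p : Ω → ℝ) (E : Ω → Prop) : ℝ :=
  ∑ ω, if E ω then p ω else 0

/-- Shannon entropy of a finitely-valued random variable `X` under pmf `p`. -/
noncomputable def ent {Ω S : Type*} [Fintype Ω] [Fintype S] (p : Ω → ℝ) (X : Ω → S) : ℝ :=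
  -∑ s : S, prob p (fun ω => X ω = s) * Real.log (prob p (fun ω => X ω = s))

/-- Conditional entropy `H(X|Y)`. -/
noncomputable def condEnt {Ω S T : Type*} [Fintype Ω] [Fintype S] [Fintype T]
    (p : Ω → ℝ) (X : Ω → S) (Y : Ω → T) : ℝ :=
  ent p (fun ω => (X ω, Y ω)) - ent p Y

/-- Mutual information `I(X:Y)`. -/
noncomputable def mi {Ω S T : Type*} [Fintype Ω] [Fintype S] [Fintype T]
    (p : Ω → ℝ) (X : Ω → S) (Y : Ω → T) : ℝ :=
  ent p X + ent p Y - ent p (fun ω => (X ω, Y ω))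

/-- Conditional mutual information `I(X:Y|Z)`. -/
noncomputable def cmi {Ω S T U : Type*} [Fintype Ω] [Fintype S] [Fintype T] [Fintype U]
    (p : Ω → ℝ) (X : Ω → S) (Y : Ω → T) (Z : Ω → U) : ℝ :=
  ent p (fun ω => (X ω, Z ω)) + ent p (fun ω => (Y ω, Z ω))
    - ent p (fun ω => (X ω, Y ω, Z ω)) - ent p Z

end PaperIngleton

namespace PaperIngleton

section Helpers
set_option linter.unusedSectionVars false

variable {Ω A B C : Type*} [Fintype Ω] [Fintype A] [Fintype B] [Fintype C]
variable {p : Ω → ℝ}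

lemma prob_nonneg (hp : ∀ ω, 0 ≤ p ω) (E : Ω → Prop) : 0 ≤ prob p E := by
  classical
  apply Finset.sum_nonneg
  intro ω _
  split
  · exact hp ω
  · exact le_rfl

lemma prob_congr {E F : Ω → Prop} (h : ∀ ω, E ω ↔ F ω) : prob p E = prob p F := by
  classical
  unfold prob
  exact Finset.sum_congr rfl fun ω _ => by simp [h ω]

lemma prob_marginal (W : Ω → A) (V : Ω → B) (a : A) :
    prob p (fun ω => W ω = a) = ∑ b, prob p (fun ω => (W ω, V ω) = (a, b)) := by
  classical
  unfold prob
  rw [Finset.sum_comm]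
  refine Finset.sum_congr rfl fun ω _ => ?_
  simp [Prod.ext_iff]
  by_cases h : W ω = a <;> simp [h]


variable {Ω A B C : Type*} [Fintype Ω] [Fintype A] [Fintype B] [Fintype C]
variable {p : Ω → ℝ}

lemma ent_comp_equiv (e : A ≃ B) (W : Ω → A) :
    ent p (fun ω => e (W ω)) = ent p W := by
  unfold ent
  congr 1
  rw [← Equiv.sum_comp e (fun s : B => prob p (fun ω => (e (W ω) : B) = s) * Real.log (prob p (fun ω => (e (W ω) : B) = s)))]
  refine Finset.sum_congr rfl fun b _ => ?_
  have : prob p (fun ω => e (W ω) = e b) = prob p (fun ω => W ω = b) :=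
    prob_congr fun ω => by simp
  rw [this]

lemma mul_log_mono {a m : ℝ} (ha : 0 ≤ a) (h : a ≤ m) :
    a * Real.log a ≤ a * Real.log m := by
  rcases eq_or_lt_of_le ha with h0 | h0
  · simp [← h0]
  · exact mul_le_mul_of_nonneg_left (Real.log_le_log h0 h) ha

lemma prob_le_marg (hp : ∀ ω, 0 ≤ p ω) (W : Ω → A) (V : Ω → B) (a : A) (b : B) :
    prob p (fun ω => (W ω, V ω) = (a, b)) ≤ prob p (fun ω => W ω = a) := by
  rw [prob_marginal W V a]
  exact Finset.single_le_sum (f := fun b' => prob p (fun ω => (W ω, V ω) = (a, b'))) (fun b' _ => prob_nonneg hp _) (Finset.mem_univ b)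

lemma ent_le_ent_pair (hp : ∀ ω, 0 ≤ p ω) (W : Ω → A) (V : Ω → B) :
    ent p W ≤ ent p (fun ω => (W ω, V ω)) := by
  unfold ent
  rw [neg_le_neg_iff]
  rw [Fintype.sum_prod_type]
  apply Finset.sum_le_sum
  intro a _
  have hm : prob p (fun ω => W ω = a) * Real.log (prob p (fun ω => W ω = a))
      = ∑ b, prob p (fun ω => (W ω, V ω) = (a, b)) * Real.log (prob p (fun ω => W ω = a)) := by
    rw [← Finset.sum_mul, ← prob_marginal W V a]
  rw [hm]
  exact Finset.sum_le_sum fun b _ =>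
    mul_log_mono (prob_nonneg hp _) (prob_le_marg hp W V a b)

lemma key_ineq {a x y z : ℝ} (ha : 0 ≤ a) (hx : a ≤ x) (hy : a ≤ y) (hz : x ≤ z) :
    a * Real.log x + a * Real.log y ≤ a * Real.log a + a * Real.log z + (x * y / z - a) := by
  rcases eq_or_lt_of_le ha with h0 | h0
  · have hx0 : 0 ≤ x := le_trans ha hx
    have hy0 : 0 ≤ y := le_trans ha hy
    have hz0 : 0 ≤ z := le_trans hx0 hz
    rw [← h0]
    simp only [zero_mul, add_zero, zero_add]
    have : 0 ≤ x * y / z := by positivity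
    linarith
  · have hx0 : 0 < x := lt_of_lt_of_le h0 hx
    have hy0 : 0 < y := lt_of_lt_of_le h0 hy
    have hz0 : 0 < z := lt_of_lt_of_le hx0 hz
    have hlog := Real.log_le_sub_one_of_pos (show 0 < x * y / (z * a) by positivity)
    rw [Real.log_div (by positivity) (by positivity), Real.log_mul hx0.ne' hy0.ne',
      Real.log_mul hz0.ne' h0.ne'] at hlog
    have h2 := mul_le_mul_of_nonneg_left hlog ha
    have h3 : a * (x * y / (z * a)) = x * y / z := by
      field_simp
    nlinarith [h2, h3]

lemma sum_ineq {A B C : Type*} [Fintype A] [Fintype B] [Fintype C]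
    (q : A → B → C → ℝ) (mxz : A → C → ℝ) (myz : B → C → ℝ) (mz : C → ℝ)
    (hq0 : ∀ a b c, 0 ≤ q a b c)
    (hA : ∀ a c, mxz a c = ∑ b, q a b c)
    (hB : ∀ b c, myz b c = ∑ a, q a b c)
    (hC : ∀ c, mz c = ∑ a, mxz a c)
    (hC' : ∀ c, mz c = ∑ b, myz b c) :
    (∑ a, ∑ c, mxz a c * Real.log (mxz a c)) + (∑ b, ∑ c, myz b c * Real.log (myz b c))
      ≤ (∑ a, ∑ b, ∑ c, q a b c * Real.log (q a b c)) + ∑ c, mz c * Real.log (mz c) := by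
  classical
  have hmxz0 : ∀ a c, 0 ≤ mxz a c := fun a c => by
    rw [hA]; exact Finset.sum_nonneg fun b _ => hq0 a b c
  have hmyz0 : ∀ b c, 0 ≤ myz b c := fun b c => by
    rw [hB]; exact Finset.sum_nonneg fun a _ => hq0 a b c
  have hqx : ∀ a b c, q a b c ≤ mxz a c := fun a b c => by
    rw [hA]
    exact Finset.single_le_sum (f := fun b => q a b c) (fun b _ => hq0 a b c) (Finset.mem_univ b)
  have hqy : ∀ a b c, q a b c ≤ myz b c := fun a b c => by
    rw [hB]
    exact Finset.single_le_sum (f := fun a => q a b c) (fun a _ => hq0 a b c) (Finset.mem_univ a)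
  have hxz : ∀ a c, mxz a c ≤ mz c := fun a c => by
    rw [hC]
    exact Finset.single_le_sum (f := fun a => mxz a c) (fun a _ => hmxz0 a c) (Finset.mem_univ a)
  -- reorder sums to have `c` outermost
  rw [show (∑ a, ∑ c, mxz a c * Real.log (mxz a c))
      = ∑ c, ∑ a, mxz a c * Real.log (mxz a c) from Finset.sum_comm]
  rw [show (∑ b, ∑ c, myz b c * Real.log (myz b c))
      = ∑ c, ∑ b, myz b c * Real.log (myz b c) from Finset.sum_comm]
  rw [show (∑ a, ∑ b, ∑ c, q a b c * Real.log (q a b c))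
      = ∑ c, ∑ a, ∑ b, q a b c * Real.log (q a b c) from by
    rw [show (∑ a, ∑ b, ∑ c, q a b c * Real.log (q a b c))
        = ∑ a, ∑ c, ∑ b, q a b c * Real.log (q a b c) from
      Finset.sum_congr rfl fun a _ => Finset.sum_comm]
    exact Finset.sum_comm]
  rw [← Finset.sum_add_distrib, ← Finset.sum_add_distrib]
  apply Finset.sum_le_sum
  intro c _
  -- rewrite everything as double sums over a, b
  have e1 : ∑ a, mxz a c * Real.log (mxz a c)
      = ∑ a, ∑ b, q a b c * Real.log (mxz a c) := by
    refine Finset.sum_congr rfl fun a _ => ?_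
    nth_rewrite 1 [hA a c]
    rw [Finset.sum_mul]
  have e2 : ∑ b, myz b c * Real.log (myz b c)
      = ∑ a, ∑ b, q a b c * Real.log (myz b c) := by
    rw [show (∑ a, ∑ b, q a b c * Real.log (myz b c))
        = ∑ b, ∑ a, q a b c * Real.log (myz b c) from Finset.sum_comm]
    refine Finset.sum_congr rfl fun b _ => ?_
    nth_rewrite 1 [hB b c]
    rw [Finset.sum_mul]
  have e3 : mz c * Real.log (mz c) = ∑ a, ∑ b, q a b c * Real.log (mz c) := by
    nth_rewrite 1 [hC c]
    rw [Finset.sum_mul]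
    refine Finset.sum_congr rfl fun a _ => ?_
    nth_rewrite 1 [hA a c]
    rw [Finset.sum_mul]
  have hBsum : (∑ a, ∑ b, mxz a c * myz b c / mz c) = ∑ a, ∑ b, q a b c := by
    have inner : ∀ a, (∑ b, mxz a c * myz b c / mz c) = mxz a c := by
      intro a
      have : (∑ b, mxz a c * myz b c / mz c) = mxz a c * mz c / mz c := by
        rw [hC' c, Finset.mul_sum, Finset.sum_div]
      rw [this]
      rcases eq_or_ne (mz c) 0 with h | h
      · have hz : mxz a c = 0 := le_antisymm (h ▸ hxz a c) (hmxz0 a c)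
        simp [hz]
      · field_simp
    rw [Finset.sum_congr rfl fun a _ => inner a,
      Finset.sum_congr rfl fun a _ => (hA a c)]
  have k1 : (∑ a, ∑ b, (q a b c * Real.log (mxz a c) + q a b c * Real.log (myz b c)))
      ≤ ∑ a, ∑ b, (q a b c * Real.log (q a b c) + q a b c * Real.log (mz c)
          + (mxz a c * myz b c / mz c - q a b c)) :=
    Finset.sum_le_sum fun a _ => Finset.sum_le_sum fun b _ =>
      key_ineq (hq0 a b c) (hqx a b c) (hqy a b c) (hxz a c)
  simp only [Finset.sum_add_distrib, Finset.sum_sub_distrib] at k1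
  rw [e1, e2, e3]
  linarith [k1, hBsum]

lemma cmi_core (hp : ∀ ω, 0 ≤ p ω) (X : Ω → A) (Y : Ω → B) (Z : Ω → C) :
    ent p (fun ω => (X ω, Y ω, Z ω)) + ent p Z ≤
      ent p (fun ω => (X ω, Z ω)) + ent p (fun ω => (Y ω, Z ω)) := by
  classical
  unfold ent
  rw [← neg_add, ← neg_add, neg_le_neg_iff]
  simp only [Fintype.sum_prod_type]
  refine sum_ineq (fun a b c => prob p (fun ω => (X ω, Y ω, Z ω) = (a, b, c)))
    (fun a c => prob p (fun ω => (X ω, Z ω) = (a, c)))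
    (fun b c => prob p (fun ω => (Y ω, Z ω) = (b, c)))
    (fun c => prob p (fun ω => Z ω = c))
    (fun a b c => prob_nonneg hp _) ?_ ?_ ?_ ?_
  · intro a c
    beta_reduce
    rw [prob_marginal (fun ω => (X ω, Z ω)) Y (a, c)]
    exact Finset.sum_congr rfl fun b _ => prob_congr fun ω => by
      simp only [Prod.mk.injEq]; tauto
  · intro b c
    beta_reduce
    rw [prob_marginal (fun ω => (Y ω, Z ω)) X (b, c)]
    exact Finset.sum_congr rfl fun a _ => prob_congr fun ω => by
      simp only [Prod.mk.injEq]; tauto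
  · intro c
    beta_reduce
    rw [prob_marginal Z X c]
    exact Finset.sum_congr rfl fun a _ => prob_congr fun ω => by
      simp only [Prod.mk.injEq]; tauto
  · intro c
    beta_reduce
    rw [prob_marginal Z Y c]
    exact Finset.sum_congr rfl fun b _ => prob_congr fun ω => by
      simp only [Prod.mk.injEq]; tauto

end Helpers

theorem stmt0 {Ω S T U : Type} [Fintype Ω] [Fintype S] [Fintype T] [Fintype U]
    (p : Ω → ℝ) (hp : ∀ ω, 0 ≤ p ω) (hp1 : ∑ ω, p ω = 1)
    (X : Ω → S) (Y : Ω → T) (Z : Ω → U) :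
    ent p Z ≤ condEnt p Z X + condEnt p Z Y + mi p X Y := by
  have h1 : ent p (fun ω => (Z ω, X ω)) = ent p (fun ω => (X ω, Z ω)) :=
    ent_comp_equiv (Equiv.prodComm S U) (fun ω => (X ω, Z ω))
  have h2 : ent p (fun ω => (Z ω, Y ω)) = ent p (fun ω => (Y ω, Z ω)) :=
    ent_comp_equiv (Equiv.prodComm T U) (fun ω => (Y ω, Z ω))
  have h3 : ent p (fun ω => (X ω, Y ω, Z ω)) = ent p (fun ω => ((X ω, Y ω), Z ω)) :=
    ent_comp_equiv (Equiv.prodAssoc S T U) (fun ω => ((X ω, Y ω), Z ω))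
  have h4 : ent p (fun ω => (X ω, Y ω)) ≤ ent p (fun ω => ((X ω, Y ω), Z ω)) :=
    ent_le_ent_pair hp (fun ω => (X ω, Y ω)) Z
  have h5 := cmi_core hp X Y Z
  unfold condEnt mi
  linarith

end PaperIngleton
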